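/- arXiv:2006.04785 — 2 statements merged into one kernel-verified Lean document; each statement's English description precedes it below -/
import Mathlib

section
/- Computation of the conjugate of f(φ) = t·sup_Ω(φ − L): for μ in the dual U of C_ζ(Ω), f*(μ) = ∫_Ω L dμ if μ ≥ 0 and ∫_Ω dμ = t, and f*(μ) = +∞ otherwise. -/
open MeasureTheory Set Filter
open scoped Topology ENNReal

noncomputable section

/-- The phase space `T^n × ℝ^n × ℝ` (space, momentum, time). -/
abbrev Phase (n : ℕ) := EuclideanSpace ℝ (Fin n) × EuclideanSpace ℝ (Fin n) × ℝ

/-- `Ω = T^n × ℝ^n × [0,t]`. -/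
def OmegaSet (n : ℕ) (t : ℝ) : Set (Phase n) := {z | z.2.2 ∈ Set.Icc 0 t}

/-- Membership in the weighted space `C_ζ(Ω)`: continuity on `Ω`, growth at most
`1 + |q|^ζ`, and decay of `φ/(1+|q|^ζ)` as `|q| → ∞`, uniformly in `(x,s)`. -/
def MemCzeta {n : ℕ} (ζ t : ℝ) (φ : Phase n → ℝ) : Prop :=
  ContinuousOn φ (OmegaSet n t) ∧
  (∃ M : ℝ, ∀ z ∈ OmegaSet n t, |φ z| ≤ M * (1 + ‖z.2.1‖ ^ ζ)) ∧
  (∀ ε > 0, ∃ R : ℝ, ∀ z ∈ OmegaSet n t, R ≤ ‖z.2.1‖ → |φ z| ≤ ε * (1 + ‖z.2.1‖ ^ ζ))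

/-- Integration of `f` against a signed (Radon) measure `μ`. -/
def sInt {n : ℕ} (μ : SignedMeasure (Phase n)) (f : Phase n → ℝ) : ℝ :=
  ∫ z, f z ∂μ.toJordanDecomposition.posPart - ∫ z, f z ∂μ.toJordanDecomposition.negPart

/-- Membership in `U`, the dual of `C_ζ(Ω)`: Radon measures carried by `Ω` with
`∫ (1+|q|^ζ) d|μ| < ∞`. -/
def MemU {n : ℕ} (ζ t : ℝ) (μ : SignedMeasure (Phase n)) : Prop :=
  μ.totalVariation (OmegaSet n t)ᶜ = 0 ∧
  Integrable (fun z : Phase n => 1 + ‖z.2.1‖ ^ ζ) μ.totalVariation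

/-- `f(φ) = t · sup_Ω (φ − L)`. -/
def fVal {n : ℕ} (t : ℝ) (L : EuclideanSpace ℝ (Fin n) → EuclideanSpace ℝ (Fin n) → ℝ)
    (φ : Phase n → ℝ) : ℝ :=
  t * sSup ((fun z : Phase n => φ z - L z.1 z.2.1) '' OmegaSet n t)

/-- The Legendre–Fenchel conjugate `f*(μ) = sup_{φ ∈ C_ζ(Ω)} (∫ φ dμ − f(φ))`
(valued in extended reals). -/
def fStar {n : ℕ} (ζ t : ℝ)
    (L : EuclideanSpace ℝ (Fin n) → EuclideanSpace ℝ (Fin n) → ℝ)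
    (μ : SignedMeasure (Phase n)) : EReal :=
  ⨆ φ ∈ {φ : Phase n → ℝ | MemCzeta ζ t φ},
    ((sInt μ φ : EReal) - ((fVal t L φ : ℝ) : EReal))

/-- The extended-real integral of a function `g` bounded below against a (nonnegative)
measure: `∫ g⁺ − ∫ g⁻` computed with lower integrals, so that the value `+∞` is kept. -/
def eInt {n : ℕ} (μ : Measure (Phase n)) (g : Phase n → ℝ) : EReal :=
  ((∫⁻ z, ENNReal.ofReal (g z) ∂μ : ℝ≥0∞) : EReal)
    - ((∫⁻ z, ENNReal.ofReal (-(g z)) ∂μ : ℝ≥0∞) : EReal)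

section Helpers

variable {n : ℕ} {ζ t : ℝ}

lemma omega_meas : MeasurableSet (OmegaSet n t) :=
  (measurableSet_Icc).preimage (measurable_snd.snd)

lemma omega_nonempty (ht : 0 ≤ t) : (OmegaSet n t).Nonempty :=
  ⟨(0, 0, 0), by simp [OmegaSet, ht]⟩

lemma ereal_coe_of_ne_top {x : ℝ≥0∞} (hx : x ≠ ⊤) : ((x.toReal : ℝ) : EReal) = (x : EReal) := by
  rw [← EReal.toReal_coe_ennreal]
  exact EReal.coe_toReal (by simpa [EReal.coe_ennreal_eq_top_iff]) (by
    exact ne_of_gt (lt_of_lt_of_le EReal.bot_lt_zero (EReal.coe_ennreal_nonneg x)))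

lemma ereal_iSup_coe_of_tendsto {a : ℕ → ℝ} {l : ℝ} (ha : Monotone a)
    (hl : Tendsto a atTop (𝓝 l)) : (⨆ k, ((a k : ℝ) : EReal)) = (l : EReal) := by
  have h1 : Tendsto (fun k => ((a k : ℝ) : EReal)) atTop (𝓝 (⨆ k, ((a k : ℝ) : EReal))) :=
    tendsto_atTop_iSup (fun i j hij => EReal.coe_le_coe_iff.2 (ha hij))
  have h2 : Tendsto (fun k => ((a k : ℝ) : EReal)) atTop (𝓝 (l : EReal)) :=
    (continuous_coe_real_ereal.tendsto l).comp hl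
  exact tendsto_nhds_unique h1 h2

lemma eInt_eq_integral {ν : Measure (Phase n)} {g : Phase n → ℝ}
    (hg : Integrable g ν) : eInt ν g = ((∫ z, g z ∂ν : ℝ) : EReal) := by
  have hA : (∫⁻ z, ENNReal.ofReal (g z) ∂ν) ≠ ⊤ := by
    refine ne_of_lt (lt_of_le_of_lt (lintegral_mono fun z => ?_) hg.2)
    rw [← ofReal_norm]
    exact ENNReal.ofReal_le_ofReal (le_abs_self _)
  have hB : (∫⁻ z, ENNReal.ofReal (-(g z)) ∂ν) ≠ ⊤ := by
    refine ne_of_lt (lt_of_le_of_lt (lintegral_mono fun z => ?_) hg.2)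
    rw [← ofReal_norm]
    exact ENNReal.ofReal_le_ofReal (neg_le_abs _)
  rw [eInt, integral_eq_lintegral_pos_part_sub_lintegral_neg_part hg,
    EReal.coe_sub, ereal_coe_of_ne_top hA, ereal_coe_of_ne_top hB]

lemma neg_lintegral_ne_top {ν : Measure (Phase n)} [IsFiniteMeasure ν] {g : Phase n → ℝ}
    {c : ℝ} (hc : ∀ z, c ≤ g z) : (∫⁻ z, ENNReal.ofReal (-(g z)) ∂ν) ≠ ⊤ := by
  have hpt : ∀ z, ENNReal.ofReal (-(g z)) ≤ ENNReal.ofReal (-c) :=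
    fun z => ENNReal.ofReal_le_ofReal (by linarith [hc z])
  refine ne_of_lt (lt_of_le_of_lt (lintegral_mono hpt) ?_)
  rw [lintegral_const]
  exact ENNReal.mul_lt_top ENNReal.ofReal_lt_top (measure_lt_top ν univ)

lemma eInt_eq_top_of {ν : Measure (Phase n)} [IsFiniteMeasure ν] {g : Phase n → ℝ}
    {c : ℝ} (hc : ∀ z, c ≤ g z) (hA : (∫⁻ z, ENNReal.ofReal (g z) ∂ν) = ⊤) :
    eInt ν g = ⊤ := by
  rw [eInt, hA, ← ereal_coe_of_ne_top (neg_lintegral_ne_top hc),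
    EReal.coe_ennreal_top, EReal.top_sub_coe]

lemma integrable_of_pos_lintegral_ne_top {ν : Measure (Phase n)} [IsFiniteMeasure ν]
    {g : Phase n → ℝ} {c : ℝ} (hc : ∀ z, c ≤ g z) (hgm : Measurable g)
    (hA : (∫⁻ z, ENNReal.ofReal (g z) ∂ν) ≠ ⊤) : Integrable g ν := by
  refine ⟨hgm.aestronglyMeasurable, ?_⟩
  have hpt : ∀ z, (‖g z‖₊ : ℝ≥0∞) ≤ ENNReal.ofReal (g z) + ENNReal.ofReal (-(g z)) := by
    intro z
    rw [← enorm_eq_nnnorm, ← ofReal_norm, Real.norm_eq_abs]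
    rcases le_total 0 (g z) with h | h
    · rw [abs_of_nonneg h]; exact le_self_add
    · rw [abs_of_nonpos h]; exact le_add_self
  refine lt_of_le_of_lt (lintegral_mono hpt) ?_
  rw [lintegral_add_left hgm.ennreal_ofReal]
  exact ENNReal.add_lt_top.2
    ⟨lt_top_iff_ne_top.2 hA, lt_top_iff_ne_top.2 (neg_lintegral_ne_top hc)⟩

lemma min_int {ν : Measure (Phase n)} [IsFiniteMeasure ν] {g : Phase n → ℝ}
    {c : ℝ} (hc : ∀ z, c ≤ g z) (hgm : Measurable g) (k : ℕ) :
    Integrable (fun z => min (g z) k) ν := by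
  refine (integrable_const (max |c| k)).mono'
    ((hgm.min measurable_const).aestronglyMeasurable) (ae_of_all _ fun z => ?_)
  rw [Real.norm_eq_abs, abs_le]
  constructor
  · refine le_min (le_trans ?_ (hc z)) ?_
    · have := neg_abs_le c; have := le_max_left |c| (k:ℝ); linarith
    · have : (0:ℝ) ≤ k := Nat.cast_nonneg k
      have := le_max_right |c| (k:ℝ); have := abs_nonneg c; linarith
  · exact le_trans (min_le_right _ _) (le_max_right _ _)

lemma eInt_eq_iSup {ν : Measure (Phase n)} [IsFiniteMeasure ν] {g : Phase n → ℝ}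
    {c : ℝ} (hc : ∀ z, c ≤ g z) (hgm : Measurable g) :
    (⨆ k : ℕ, ((∫ z, min (g z) k ∂ν : ℝ) : EReal)) = eInt ν g := by
  set A := ∫⁻ z, ENNReal.ofReal (g z) ∂ν with hA_def
  have hmeas : ∀ k : ℕ, Measurable fun z => ENNReal.ofReal (min (g z) k) :=
    fun k => (hgm.min measurable_const).ennreal_ofReal
  have hmono : Monotone fun (k : ℕ) (z : Phase n) => ENNReal.ofReal (min (g z) k) :=
    fun i j hij z => ENNReal.ofReal_le_ofReal (min_le_min le_rfl (Nat.cast_le.2 hij))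
  have hsup : (⨆ k : ℕ, ∫⁻ z, ENNReal.ofReal (min (g z) k) ∂ν) = A := by
    rw [← lintegral_iSup hmeas hmono]
    refine lintegral_congr fun z => ?_
    refine le_antisymm (iSup_le fun k => ENNReal.ofReal_le_ofReal (min_le_left _ _)) ?_
    refine le_iSup_of_le ⌈g z⌉₊ ?_
    rw [min_eq_left (Nat.le_ceil _)]
  have hAk_ne : ∀ k : ℕ, (∫⁻ z, ENNReal.ofReal (min (g z) k) ∂ν) ≠ ⊤ := by
    intro k
    refine ne_of_lt (lt_of_le_of_lt (lintegral_mono fun z =>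
      ENNReal.ofReal_le_ofReal (min_le_right _ _)) ?_)
    rw [lintegral_const]
    exact ENNReal.mul_lt_top ENNReal.ofReal_lt_top (measure_lt_top ν univ)
  have hminint := min_int hc hgm (ν := ν)
  by_cases hA : A = ⊤
  · rw [eInt_eq_top_of hc hA, EReal.eq_top_iff_forall_lt]
    intro r
    set D := ENNReal.ofReal (max (-c) 0) * ν univ with hD_def
    have hD_ne : D ≠ ⊤ :=
      ne_of_lt (ENNReal.mul_lt_top ENNReal.ofReal_lt_top (measure_lt_top ν univ))
    rw [hA] at hsup
    obtain ⟨k, hk⟩ : ∃ k : ℕ,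
        ENNReal.ofReal (r + D.toReal + 1) < ∫⁻ z, ENNReal.ofReal (min (g z) k) ∂ν := by
      rw [← lt_iSup_iff, hsup]; exact ENNReal.ofReal_lt_top
    have h1 : r + D.toReal + 1 ≤ (∫⁻ z, ENNReal.ofReal (min (g z) k) ∂ν).toReal :=
      (ENNReal.ofReal_le_iff_le_toReal (hAk_ne k)).1 hk.le
    have hBk : (∫⁻ z, ENNReal.ofReal (-(min (g z) k)) ∂ν) ≤ D := by
      rw [hD_def, ← lintegral_const]
      refine lintegral_mono fun z => ENNReal.ofReal_le_ofReal ?_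
      rw [neg_inf]
      refine max_le (le_trans (by linarith [hc z]) (le_max_left _ _)) ?_
      exact le_trans (by simp) (le_max_right (-c) (0:ℝ))
    have h2 : (∫⁻ z, ENNReal.ofReal (-(min (g z) k)) ∂ν).toReal ≤ D.toReal :=
      ENNReal.toReal_mono hD_ne hBk
    have hint : ∫ z, min (g z) k ∂ν
        = (∫⁻ z, ENNReal.ofReal (min (g z) k) ∂ν).toReal
          - (∫⁻ z, ENNReal.ofReal (-(min (g z) k)) ∂ν).toReal :=
      integral_eq_lintegral_pos_part_sub_lintegral_neg_part (hminint k)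
    have : r < ∫ z, min (g z) k ∂ν := by rw [hint]; linarith
    exact lt_of_lt_of_le (EReal.coe_lt_coe_iff.2 this)
      (le_iSup (fun k : ℕ => ((∫ z, min (g z) k ∂ν : ℝ) : EReal)) k)
  · have hgInt : Integrable g ν := integrable_of_pos_lintegral_ne_top hc hgm hA
    rw [eInt_eq_integral hgInt]
    refine ereal_iSup_coe_of_tendsto
      (fun i j hij => integral_mono (hminint i) (hminint j)
        (fun z => min_le_min le_rfl (Nat.cast_le.2 hij))) ?_
    refine integral_tendsto_of_tendsto_of_monotone hminint hgInt
      (ae_of_all _ fun z i j hij => min_le_min le_rfl (Nat.cast_le.2 hij))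
      (ae_of_all _ fun z => ?_)
    refine tendsto_atTop_of_eventually_const (i₀ := ⌈g z⌉₊) fun k hk => ?_
    exact min_eq_left (le_trans (Nat.le_ceil _) (Nat.cast_le.2 hk))

lemma memCzeta_of_bdd (hζ : 1 ≤ ζ) {φ : Phase n → ℝ} (hφc : Continuous φ) (B : ℝ)
    (hB : ∀ z, |φ z| ≤ B) : MemCzeta ζ t φ := by
  refine ⟨hφc.continuousOn, ⟨B, fun z _ => ?_⟩, fun ε hε => ?_⟩
  · have h1 : (0:ℝ) ≤ ‖z.2.1‖ ^ ζ := Real.rpow_nonneg (norm_nonneg _) ζ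
    have hB0 : 0 ≤ B := le_trans (abs_nonneg _) (hB z)
    nlinarith [hB z]
  · refine ⟨max 1 (B / ε), fun z _ hR => ?_⟩
    have h1 : (1:ℝ) ≤ ‖z.2.1‖ := le_trans (le_max_left _ _) hR
    have h2 : B / ε ≤ ‖z.2.1‖ := le_trans (le_max_right _ _) hR
    have h3 : ‖z.2.1‖ ≤ ‖z.2.1‖ ^ ζ := by
      calc ‖z.2.1‖ = ‖z.2.1‖ ^ (1:ℝ) := (Real.rpow_one _).symm
      _ ≤ ‖z.2.1‖ ^ ζ := Real.rpow_le_rpow_of_exponent_le h1 hζ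
    have h4 : B ≤ ‖z.2.1‖ ^ ζ * ε := (div_le_iff₀ hε).1 (h2.trans h3)
    have := hB z
    nlinarith [hε.le]

lemma bddAbove_sub_L {L : EuclideanSpace ℝ (Fin n) → EuclideanSpace ℝ (Fin n) → ℝ}
    (hζ0 : 0 ≤ ζ) {φ : Phase n → ℝ} {M cL R : ℝ} (hM : 0 ≤ M)
    (hφ : ∀ z ∈ OmegaSet n t, |φ z| ≤ M * (1 + ‖z.2.1‖ ^ ζ))
    (hcL : ∀ x q, cL ≤ L x q)
    (hR : ∀ x q, R ≤ ‖q‖ → M * (1 + ‖q‖ ^ ζ) ≤ L x q) :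
    BddAbove ((fun z : Phase n => φ z - L z.1 z.2.1) '' OmegaSet n t) := by
  refine ⟨max 0 (M * (1 + (max R 0) ^ ζ) - cL), ?_⟩
  rintro x ⟨z, hz, rfl⟩
  dsimp only
  rcases le_total R ‖z.2.1‖ with h | h
  · have h1 := hR z.1 z.2.1 h
    have h2 := (abs_le.1 (hφ z hz)).2
    exact le_trans (by linarith) (le_max_left _ _)
  · have h2 := (abs_le.1 (hφ z hz)).2
    have h3 : ‖z.2.1‖ ^ ζ ≤ (max R 0) ^ ζ :=
      Real.rpow_le_rpow (norm_nonneg _) (le_max_of_le_left h) hζ0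
    have h4 := hcL z.1 z.2.1
    refine le_trans ?_ (le_max_right _ _)
    nlinarith

lemma fVal_aux_le {L : EuclideanSpace ℝ (Fin n) → EuclideanSpace ℝ (Fin n) → ℝ}
    (ht : 0 ≤ t) {φ : Phase n → ℝ} {B : ℝ}
    (h : ∀ z ∈ OmegaSet n t, φ z - L z.1 z.2.1 ≤ B) :
    sSup ((fun z : Phase n => φ z - L z.1 z.2.1) '' OmegaSet n t) ≤ B :=
  csSup_le ((omega_nonempty ht).image _) (by rintro x ⟨z, hz, rfl⟩; exact h z hz)

lemma integrable_of_czeta {μ : SignedMeasure (Phase n)} (hμU : MemU ζ t μ)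
    {φ : Phase n → ℝ} (hφ : MemCzeta ζ t φ) {ν : Measure (Phase n)}
    (hν : ν ≤ μ.totalVariation) : Integrable φ ν := by
  have hνΩ : ν (OmegaSet n t)ᶜ = 0 :=
    le_antisymm (le_trans (Measure.le_iff'.1 hν _) hμU.1.le) zero_le
  have hae : ∀ᵐ z ∂ν, z ∈ OmegaSet n t := by
    rw [ae_iff]
    exact hνΩ
  have hres : ν.restrict (OmegaSet n t) = ν := Measure.restrict_eq_self_of_ae_mem hae
  have hmeas : AEStronglyMeasurable φ ν := by
    have h5 : AEMeasurable φ (ν.restrict (OmegaSet n t)) := hφ.1.aemeasurable omega_meas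
    rw [hres] at h5
    exact h5.aestronglyMeasurable
  obtain ⟨M, hM⟩ := hφ.2.1
  set M' := max M 0 with hM'
  have hint : Integrable (fun z : Phase n => M' * (1 + ‖z.2.1‖ ^ ζ)) ν :=
    (hμU.2.mono_measure hν).const_mul M'
  refine hint.mono' hmeas (hae.mono fun z hz => ?_)
  have h1 : (0:ℝ) ≤ ‖z.2.1‖ ^ ζ := Real.rpow_nonneg (norm_nonneg _) ζ
  have h2 := hM z hz
  have h3 : M ≤ M' := le_max_left _ _
  have h4 : 0 ≤ M' := le_max_right _ _
  rw [Real.norm_eq_abs]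
  nlinarith

lemma jordan_apply (μ : SignedMeasure (Phase n)) {j : Set (Phase n)} (hj : MeasurableSet j) :
    μ j = (μ.toJordanDecomposition.posPart j).toReal
      - (μ.toJordanDecomposition.negPart j).toReal := by
  conv_lhs => rw [← μ.toSignedMeasure_toJordanDecomposition]
  exact Measure.toSignedMeasure_sub_apply hj

lemma sm_negPart_zero (μ : SignedMeasure (Phase n)) (hμ : 0 ≤ μ) :
    μ.toJordanDecomposition.negPart = 0 := by
  obtain ⟨i, hi₁, hi₂, hi₃, hpos, hneg⟩ := μ.toJordanDecomposition_spec
  refine Measure.measure_univ_eq_zero.1 ?_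
  rw [hneg, SignedMeasure.toMeasureOfLEZero_apply _ hi₃ hi₁.compl MeasurableSet.univ]
  have h0 : 0 ≤ μ iᶜ := by
    have := (VectorMeasure.le_iff.1 hμ) iᶜ hi₁.compl
    simpa using this
  have h1 : μ iᶜ ≤ 0 := VectorMeasure.nonpos_of_restrict_le_zero _ hi₃
  have h2 : -μ iᶜ = 0 := by linarith
  simp [h2]

lemma negPart_univ_pos (μ : SignedMeasure (Phase n)) (hμ : ¬ 0 ≤ μ) :
    0 < (μ.toJordanDecomposition.negPart univ).toReal := by
  rw [VectorMeasure.le_iff] at hμ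
  push_neg at hμ
  obtain ⟨j, hj, hjneg⟩ := hμ
  rw [VectorMeasure.zero_apply] at hjneg
  have happ := jordan_apply μ hj
  have hple : (0:ℝ) ≤ (μ.toJordanDecomposition.posPart j).toReal := ENNReal.toReal_nonneg
  have hlt : 0 < (μ.toJordanDecomposition.negPart j).toReal := by linarith
  have hmono : (μ.toJordanDecomposition.negPart j) ≤ μ.toJordanDecomposition.negPart univ :=
    measure_mono (subset_univ _)
  exact lt_of_lt_of_le hlt (ENNReal.toReal_mono (measure_ne_top _ _) hmono)

lemma clamp_close {a b : ℝ} (ha : |a| ≤ 1) : |max (-1) (min 1 b) - a| ≤ |b - a| := by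
  rcases abs_le.1 ha with ⟨ha1, ha2⟩
  rcases le_total b (-1) with hb | hb
  · rw [min_eq_right (by linarith : b ≤ (1:ℝ)), max_eq_left (by linarith : b ≤ (-1:ℝ)),
      abs_of_nonpos (by linarith : b - a ≤ 0), abs_le]
    constructor <;> linarith
  · rcases le_total 1 b with hb2 | hb2
    · rw [min_eq_left hb2, max_eq_right (by norm_num : (-1:ℝ) ≤ 1),
        abs_of_nonneg (by linarith : (0:ℝ) ≤ b - a), abs_le]
      constructor <;> linarith
    · rw [min_eq_right hb2, max_eq_right hb]

end Helpers

set_option maxHeartbeats 1000000 in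
/-- computation of the conjugate of `f(φ) = t·sup_Ω(φ − L)`: for `μ ∈ U`,
`f*(μ) = ∫_Ω L dμ` if `μ ≥ 0` and `∫_Ω dμ = t`, and `f*(μ) = +∞` otherwise. -/
theorem fstar_computation {n : ℕ} (ζ t : ℝ) (hζ : 1 < ζ) (ht : 0 < t)
    (L : EuclideanSpace ℝ (Fin n) → EuclideanSpace ℝ (Fin n) → ℝ)
    (hLcont : Continuous fun z : EuclideanSpace ℝ (Fin n) × EuclideanSpace ℝ (Fin n) =>
      L z.1 z.2)
    (hLbelow : ∃ c : ℝ, ∀ x q, c ≤ L x q)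
    (hLsuper : ∀ M : ℝ, ∃ R : ℝ, ∀ (x q : EuclideanSpace ℝ (Fin n)), R ≤ ‖q‖ →
      M * (1 + ‖q‖ ^ ζ) ≤ L x q)
    (μ : SignedMeasure (Phase n)) (hμU : MemU ζ t μ) :
    (0 ≤ μ → sInt μ (fun _ => (1 : ℝ)) = t →
      fStar ζ t L μ = eInt μ.totalVariation (fun z => L z.1 z.2.1)) ∧
    (¬ (0 ≤ μ ∧ sInt μ (fun _ => (1 : ℝ)) = t) → fStar ζ t L μ = ⊤) := by
  classical
  obtain ⟨cL, hcL⟩ := hLbelow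
  have hζ0 : (0:ℝ) ≤ ζ := by linarith
  have hgcont : Continuous (fun z : Phase n => L z.1 z.2.1) :=
    hLcont.comp (continuous_fst.prodMk (continuous_fst.comp continuous_snd))
  have hgm : Measurable (fun z : Phase n => L z.1 z.2.1) := hgcont.measurable
  have hcg : ∀ z : Phase n, cL ≤ L z.1 z.2.1 := fun z => hcL z.1 z.2.1
  set p := μ.toJordanDecomposition.posPart with hp_def
  set m := μ.toJordanDecomposition.negPart with hm_def
  have hτ : μ.totalVariation = p + m := rfl
  haveI : IsFiniteMeasure μ.totalVariation := inferInstanceAs (IsFiniteMeasure (p + m))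
  have hp_le : p ≤ μ.totalVariation := by rw [hτ]; exact Measure.le_add_right le_rfl
  have hm_le : m ≤ μ.totalVariation := by rw [hτ]; exact Measure.le_add_left le_rfl
  have hsInt_def : ∀ f : Phase n → ℝ, sInt μ f = ∫ z, f z ∂p - ∫ z, f z ∂m := fun _ => rfl
  have hmass_eq : sInt μ (fun _ => (1:ℝ)) = (p univ).toReal - (m univ).toReal := by
    rw [hsInt_def]
    simp [measureReal_def]
  constructor
  · -- Part 1
    intro hposμ hmass
    have hm0 : m = 0 := sm_negPart_zero μ hposμ
    have hτp : μ.totalVariation = p := by rw [hτ, hm0, add_zero]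
    have hPt : (p univ).toReal = t := by
      have h := hmass_eq
      rw [hmass, hm0] at h
      simp at h
      linarith
    rw [hτp]
    refine le_antisymm ?_ ?_
    · -- fStar ≤ eInt p g
      refine iSup₂_le fun φ hφ => ?_
      have hφm : MemCzeta ζ t φ := hφ
      by_cases hA : (∫⁻ z, ENNReal.ofReal (L z.1 z.2.1) ∂p) = ⊤
      · rw [eInt_eq_top_of hcg hA]
        exact le_top
      · have hgInt : Integrable (fun z : Phase n => L z.1 z.2.1) p :=
          integrable_of_pos_lintegral_ne_top hcg hgm hA
        rw [eInt_eq_integral hgInt, ← EReal.coe_sub, EReal.coe_le_coe_iff]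
        obtain ⟨M₀, hM₀⟩ := hφm.2.1
        set M := max M₀ 0 with hM_def
        have hM0 : 0 ≤ M := le_max_right _ _
        have hφM : ∀ z ∈ OmegaSet n t, |φ z| ≤ M * (1 + ‖z.2.1‖ ^ ζ) := by
          intro z hz
          have h1 : (0:ℝ) ≤ ‖z.2.1‖ ^ ζ := Real.rpow_nonneg (norm_nonneg _) ζ
          have h2 := hM₀ z hz
          have h3 : M₀ ≤ M := le_max_left _ _
          nlinarith
        obtain ⟨R, hR⟩ := hLsuper M
        have hbdd := bddAbove_sub_L (t := t) hζ0 hM0 hφM hcL hR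
        set Sφ := sSup ((fun z : Phase n => φ z - L z.1 z.2.1) '' OmegaSet n t) with hS_def
        have hpΩ : p (OmegaSet n t)ᶜ = 0 :=
          le_antisymm (le_trans (Measure.le_iff'.1 hp_le _) hμU.1.le) zero_le
        have haeΩ : ∀ᵐ z ∂p, z ∈ OmegaSet n t := by
          rw [ae_iff]; exact hpΩ
        have hφint : Integrable φ p := integrable_of_czeta hμU hφm hp_le
        have hSgint : Integrable (fun z : Phase n => Sφ + L z.1 z.2.1) p := (integrable_const Sφ).add hgInt
        have hle : ∫ z, φ z ∂p ≤ ∫ z, (Sφ + L z.1 z.2.1) ∂p := by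
          refine integral_mono_ae hφint hSgint (haeΩ.mono fun z hz => ?_)
          have h6 : φ z - L z.1 z.2.1 ≤ Sφ := le_csSup hbdd ⟨z, hz, rfl⟩
          simp only
          linarith
        have hSg : ∫ z, (Sφ + L z.1 z.2.1) ∂p = Sφ * t + ∫ z, L z.1 z.2.1 ∂p := by
          rw [integral_add (integrable_const Sφ) hgInt, integral_const, measureReal_def, hPt, smul_eq_mul, mul_comm]
        have hsint : sInt μ φ = ∫ z, φ z ∂p := by
          rw [hsInt_def, hm0]
          simp
        have hfv : fVal t L φ = t * Sφ := rfl
        rw [hsint, hfv]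
        rw [hSg] at hle
        linarith
    · -- eInt p g ≤ fStar
      calc eInt p (fun z : Phase n => L z.1 z.2.1)
          = ⨆ k : ℕ, ((∫ z, min (L z.1 z.2.1) k ∂p : ℝ) : EReal) :=
            (eInt_eq_iSup hcg hgm).symm
        _ ≤ fStar ζ t L μ := by
            refine iSup_le fun k => ?_
            have habs : ∀ z : Phase n, |min (L z.1 z.2.1) (k:ℝ)| ≤ max |cL| k := by
              intro z
              rw [abs_le]
              constructor
              · refine le_min (le_trans ?_ (hcg z)) ?_
                · have := neg_abs_le cL; have := le_max_left |cL| (k:ℝ); linarith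
                · have h7 : (0:ℝ) ≤ k := Nat.cast_nonneg k
                  have := le_max_right |cL| (k:ℝ); have := abs_nonneg cL; linarith
              · exact le_trans (min_le_right _ _) (le_max_right _ _)
            have hmem : MemCzeta ζ t (fun z : Phase n => min (L z.1 z.2.1) (k:ℝ)) :=
              memCzeta_of_bdd hζ.le (hgcont.min continuous_const) _ habs
            refine le_iSup₂_of_le (fun z : Phase n => min (L z.1 z.2.1) (k:ℝ)) hmem ?_
            have hfv_le : fVal t L (fun z : Phase n => min (L z.1 z.2.1) (k:ℝ)) ≤ 0 := by
              have hs := fVal_aux_le (L := L) ht.le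
                (φ := fun z : Phase n => min (L z.1 z.2.1) (k:ℝ)) (B := 0)
                (fun z _ => by linarith [min_le_left (L z.1 z.2.1) (k:ℝ)])
              exact mul_nonpos_iff.2 (Or.inl ⟨ht.le, hs⟩)
            have hsint : sInt μ (fun z : Phase n => min (L z.1 z.2.1) (k:ℝ))
                = ∫ z, min (L z.1 z.2.1) (k:ℝ) ∂p := by
              rw [hsInt_def, hm0]
              simp
            rw [hsint, ← EReal.coe_sub, EReal.coe_le_coe_iff]
            linarith
  · -- Part 2
    intro hnot
    rw [EReal.eq_top_iff_forall_lt]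
    intro r
    by_cases hmt : sInt μ (fun _ => (1:ℝ)) = t
    · -- mass correct, μ not nonneg
      have hnegμ : ¬ 0 ≤ μ := fun h => hnot ⟨h, hmt⟩
      have hN : 0 < (m univ).toReal := negPart_univ_pos μ hnegμ
      clear hnegμ hnot
      set N := (m univ).toReal with hN_def
      set P := (p univ).toReal with hP_def
      obtain ⟨S, hSmeas, hpS, hmSc⟩ := μ.toJordanDecomposition.mutuallySingular
      set u : Phase n → ℝ := fun z => if z ∈ S then (-1:ℝ) else 1 with hu_def
      have hum : Measurable u := Measurable.ite hSmeas measurable_const measurable_const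
      have hub : ∀ z, |u z| ≤ 1 := by
        intro z
        by_cases h : z ∈ S <;> simp [hu_def, h]
      have huint : Integrable u μ.totalVariation :=
        (integrable_const 1).mono' hum.aestronglyMeasurable
          (ae_of_all _ fun z => by rw [Real.norm_eq_abs]; exact hub z)
      obtain ⟨ψ, hψ_close, hψ_int⟩ :=
        huint.exists_boundedContinuous_integral_sub_le (half_pos hN)
      set φ0 : Phase n → ℝ := fun z => max (-1) (min 1 (ψ z)) with hφ0_def
      have hφ0c : Continuous φ0 := continuous_const.max (continuous_const.min ψ.continuous)
      have hφ0b : ∀ z, |φ0 z| ≤ 1 := fun z =>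
        abs_le.2 ⟨le_max_left _ _, max_le (by norm_num) (min_le_left _ _)⟩
      have hclose : ∀ z, |φ0 z - u z| ≤ |ψ z - u z| := fun z => clamp_close (hub z)
      have hψp : Integrable ψ p := hψ_int.mono_measure hp_le
      have hψm : Integrable ψ m := hψ_int.mono_measure hm_le
      have hup : Integrable u p := huint.mono_measure hp_le
      have hum2 : Integrable u m := huint.mono_measure hm_le
      have hφ0p : Integrable φ0 p :=
        (integrable_const 1).mono' hφ0c.aestronglyMeasurable
          (ae_of_all _ fun z => by rw [Real.norm_eq_abs]; exact hφ0b z)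
      have hφ0m : Integrable φ0 m :=
        (integrable_const 1).mono' hφ0c.aestronglyMeasurable
          (ae_of_all _ fun z => by rw [Real.norm_eq_abs]; exact hφ0b z)
      have hSp : ∀ᵐ z ∂p, z ∉ S := by
        rw [ae_iff]
        simpa [not_not] using hpS
      have hScm : ∀ᵐ z ∂m, z ∈ S := by
        rw [ae_iff]
        exact hmSc
      have hu_p : ∫ z, u z ∂p = P := by
        have h1 : u =ᵐ[p] fun _ => (1:ℝ) := hSp.mono fun z hz => by simp [hu_def, hz]
        rw [integral_congr_ae h1, integral_const, measureReal_def, smul_eq_mul, mul_one]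
      have hu_m : ∫ z, u z ∂m = -N := by
        have h1 : u =ᵐ[m] fun _ => (-1:ℝ) := hScm.mono fun z hz => by simp [hu_def, hz]
        rw [integral_congr_ae h1, integral_const, measureReal_def, smul_eq_mul, mul_neg_one]
      have habs_int_p : Integrable (fun z => |ψ z - u z|) p := (hψp.sub hup).abs
      have habs_int_m : Integrable (fun z => |ψ z - u z|) m := (hψm.sub hum2).abs
      have hsplit : ∫ z, |ψ z - u z| ∂p + ∫ z, |ψ z - u z| ∂m ≤ N/2 := by
        rw [← integral_add_measure habs_int_p habs_int_m]
        have h1 : ∫ z, |ψ z - u z| ∂(p + m) = ∫ z, ‖u z - ψ z‖ ∂μ.totalVariation := by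
          rw [hτ]
          exact integral_congr_ae (ae_of_all _ fun z => by
            simp [Real.norm_eq_abs, abs_sub_comm])
        rw [h1]
        exact hψ_close
      have hd_p : P - ∫ z, |ψ z - u z| ∂p ≤ ∫ z, φ0 z ∂p := by
        have h2 : ∫ z, (u z - |ψ z - u z|) ∂p ≤ ∫ z, φ0 z ∂p := by
          refine integral_mono (hup.sub habs_int_p) hφ0p fun z => ?_
          simp only
          linarith [neg_abs_le (φ0 z - u z), hclose z]
        rw [integral_sub hup habs_int_p, hu_p] at h2
        linarith
      have hd_m : ∫ z, φ0 z ∂m ≤ -N + ∫ z, |ψ z - u z| ∂m := by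
        have h2 : ∫ z, φ0 z ∂m ≤ ∫ z, (u z + |ψ z - u z|) ∂m := by
          refine integral_mono hφ0m (hum2.add habs_int_m) fun z => ?_
          simp only
          linarith [le_abs_self (φ0 z - u z), hclose z]
        rw [integral_add hum2 habs_int_m, hu_m] at h2
        linarith
      set I := ∫ z, φ0 z ∂p - ∫ z, φ0 z ∂m with hI_def
      have hPN : P - N = t := by
        rw [hmass_eq] at hmt
        exact hmt
      have hIt : N ≤ I - t := by
        rw [hI_def]
        linarith [hd_p, hd_m, hsplit]
      set c := max 0 ((r + 1 - t*cL) / N) with hc_def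
      have hc0 : 0 ≤ c := le_max_left _ _
      have hcN : r + 1 - t*cL ≤ c * N := by
        rcases le_total (r + 1 - t*cL) 0 with h | h
        · nlinarith
        · have h8 : (r + 1 - t*cL)/N ≤ c := le_max_right _ _
          calc r + 1 - t*cL = ((r + 1 - t*cL)/N) * N := by field_simp
            _ ≤ c * N := mul_le_mul_of_nonneg_right h8 hN.le
      have hφcb : ∀ z : Phase n, |c * φ0 z| ≤ c := by
        intro z
        rw [abs_mul, abs_of_nonneg hc0]
        nlinarith [hφ0b z, abs_nonneg (φ0 z)]
      have hmem : MemCzeta ζ t (fun z : Phase n => c * φ0 z) :=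
        memCzeta_of_bdd hζ.le (continuous_const.mul hφ0c) c hφcb
      have hsintc : sInt μ (fun z : Phase n => c * φ0 z) = c * I := by
        rw [hsInt_def, integral_const_mul, integral_const_mul, hI_def]
        ring
      have hfvc : fVal t L (fun z : Phase n => c * φ0 z) ≤ t * (c - cL) := by
        have hs := fVal_aux_le (L := L) ht.le (φ := fun z : Phase n => c * φ0 z)
          (B := c - cL) (fun z _ => by
            have h9 : c * φ0 z ≤ c := by nlinarith [abs_le.1 (hφ0b z)]
            linarith [hcg z])
        exact mul_le_mul_of_nonneg_left hs ht.le
      refine lt_of_lt_of_le ?_ (le_iSup₂_of_le (fun z : Phase n => c * φ0 z) hmem le_rfl)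
      rw [← EReal.coe_sub]
      refine EReal.coe_lt_coe_iff.2 ?_
      have hcI : c * N ≤ c * (I - t) := mul_le_mul_of_nonneg_left hIt hc0
      rw [hsintc]
      nlinarith [hcI, hcN, hfvc]
    · -- mass wrong: constants
      have hat : sInt μ (fun _ => (1:ℝ)) - t ≠ 0 := sub_ne_zero.2 hmt
      set a := sInt μ (fun _ => (1:ℝ)) with ha_def
      set c := (r + 1 - t*cL) / (a - t) with hc_def
      have hmem : MemCzeta ζ t (fun _ : Phase n => c) :=
        memCzeta_of_bdd hζ.le continuous_const |c| (fun z => le_rfl)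
      have hsintc : sInt μ (fun _ : Phase n => c) = a * c := by
        rw [hsInt_def, integral_const, integral_const, measureReal_def, measureReal_def, smul_eq_mul, smul_eq_mul]
        have h1 : (p univ).toReal * c - (m univ).toReal * c
            = ((p univ).toReal - (m univ).toReal) * c := by ring
        rw [h1, ← hmass_eq]
      have hfvc : fVal t L (fun _ : Phase n => c) ≤ t * (c - cL) := by
        have hs := fVal_aux_le (L := L) ht.le (φ := fun _ : Phase n => c)
          (B := c - cL) (fun z _ => by linarith [hcg z])
        exact mul_le_mul_of_nonneg_left hs ht.le
      have hkey : c * (a - t) = r + 1 - t*cL := div_mul_cancel₀ _ hat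
      refine lt_of_lt_of_le ?_ (le_iSup₂_of_le (fun _ : Phase n => c) hmem le_rfl)
      rw [← EReal.coe_sub]
      refine EReal.coe_lt_coe_iff.2 ?_
      rw [hsintc]
      nlinarith [hfvc, hkey]
end
end

section
/- Superquadratic barrier: suppose H(x,p) ≥ |p|^m/C − C with m > 2 and 0 ≤ a ∈ C²(T^n). Set m' = m/(m−1) ∈ (1,2) and ψ(x,t) = λ t^{−1/(m−1)} (|x|² + λt)^{m'/2} + Ct on R^n × (0,∞). Then for λ > 0 sufficiently large (depending only on C, n, m), ψ satisfies ψ_t − a(x)Δψ + H(x,Dψ) > 0 on R^n × (0,∞); i.e., ψ is a classical strict supersolution of the HJB equation. -/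
open Set Filter
open scoped Topology RealInnerProductSpace

noncomputable section

/-- Laplacian of `f : ℝ^n → ℝ` at `x`. -/
def lap {n : ℕ} (f : EuclideanSpace ℝ (Fin n) → ℝ) (x : EuclideanSpace ℝ (Fin n)) : ℝ :=
  ∑ i, iteratedFDeriv ℝ 2 f x ![EuclideanSpace.single i 1, EuclideanSpace.single i 1]

/-- The superquadratic barrier
`ψ(x,t) = λ t^{−1/(m−1)} (|x|² + λt)^{m'/2} + Ct`. -/
def barrier {n : ℕ} (lam C m m' : ℝ) (x : EuclideanSpace ℝ (Fin n)) (t : ℝ) : ℝ :=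
  lam * t ^ (-(1 / (m - 1))) * (‖x‖ ^ 2 + lam * t) ^ (m' / 2) + C * t

section Aux

variable {n : ℕ}

local notation "E" => EuclideanSpace ℝ (Fin n)

lemma sp_hasFDerivAt (k c β d : ℝ) (hc : 0 < c) (y : E) :
    HasFDerivAt (fun y : E => k * (‖y‖ ^ 2 + c) ^ β + d)
      (k • ((β * (‖y‖ ^ 2 + c) ^ (β - 1)) • (2 • innerSL ℝ y))) y := by
  have h1 : HasFDerivAt (fun y : E => ‖y‖ ^ 2 + c) (2 • innerSL ℝ y) y :=
    ((hasStrictFDerivAt_norm_sq y).hasFDerivAt).add_const c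
  have hpos : (0:ℝ) < ‖y‖ ^ 2 + c := by positivity
  exact ((h1.rpow_const (Or.inl hpos.ne')).const_mul k).add_const d

lemma sp_hasGradientAt (k c β d : ℝ) (hc : 0 < c) (y : E) :
    HasGradientAt (fun y : E => k * (‖y‖ ^ 2 + c) ^ β + d)
      ((k * β * (‖y‖ ^ 2 + c) ^ (β - 1) * 2) • y) y := by
  rw [hasGradientAt_iff_hasFDerivAt]
  refine (sp_hasFDerivAt k c β d hc y).congr_fderiv ?_
  ext w
  simp [inner_smul_left, real_inner_comm]
  ring

lemma sp_contDiff (k c β d : ℝ) (hc : 0 < c) :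
    ContDiff ℝ 2 (fun y : E => k * (‖y‖ ^ 2 + c) ^ β + d) := by
  rw [contDiff_iff_contDiffAt]
  intro y
  have hpos : (0:ℝ) < ‖y‖ ^ 2 + c := by positivity
  exact ((((contDiff_norm_sq ℝ : ContDiff ℝ 2 fun y : EuclideanSpace ℝ (Fin n) => ‖y‖ ^ 2).add contDiff_const).contDiffAt.rpow_const_of_ne
    hpos.ne').const_smul k).add contDiffAt_const

lemma euclid_norm_sq (x : E) : ‖x‖ ^ 2 = ∑ i, (x i) ^ 2 := by
  have := PiLp.norm_sq_eq_of_L2 (fun _ : Fin n => ℝ) x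
  simpa [Real.norm_eq_abs, sq_abs] using this

lemma sp_lap (k c β d : ℝ) (hc : 0 < c) (x : E) :
    lap (fun y : E => k * (‖y‖ ^ 2 + c) ^ β + d) x
      = 4 * k * β * (β - 1) * (‖x‖ ^ 2 + c) ^ (β - 2) * ‖x‖ ^ 2
          + 2 * k * β * n * (‖x‖ ^ 2 + c) ^ (β - 1) := by
  set f : E → ℝ := fun y => k * (‖y‖ ^ 2 + c) ^ β + d with hf
  set A : ℝ := 4 * k * β * (β - 1) * (‖x‖ ^ 2 + c) ^ (β - 2) with hA
  set B : ℝ := 2 * k * β * (‖x‖ ^ 2 + c) ^ (β - 1) with hB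
  have hcd : ContDiff ℝ 2 f := sp_contDiff k c β d hc
  have hfd : ∀ y : E, fderiv ℝ f y
      = k • ((β * (‖y‖ ^ 2 + c) ^ (β - 1)) • (2 • innerSL ℝ y)) :=
    fun y => (sp_hasFDerivAt k c β d hc y).fderiv
  have hdiff : DifferentiableAt ℝ (fderiv ℝ f) x :=
    ((hcd.fderiv_right (m := 1) (le_refl _)).differentiable one_ne_zero).differentiableAt
  have key : ∀ i : Fin n,
      iteratedFDeriv ℝ 2 f x ![EuclideanSpace.single i 1, EuclideanSpace.single i 1]
        = A * (x i) ^ 2 + B := by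
    intro i
    set e : E := EuclideanSpace.single i 1 with he
    have h2 : iteratedFDeriv ℝ 2 f x ![e, e] = fderiv ℝ (fderiv ℝ f) x e e := by
      rw [iteratedFDeriv_two_apply]; rfl
    have happ : HasFDerivAt (fun y => fderiv ℝ f y e)
        (((ContinuousLinearMap.apply ℝ ℝ e)).comp (fderiv ℝ (fderiv ℝ f) x)) x :=
      (ContinuousLinearMap.apply ℝ ℝ e).hasFDerivAt.comp x hdiff.hasFDerivAt
    have hye : ∀ y : E, ⟪y, e⟫ = y i := by
      intro y
      rw [he]
      simpa using EuclideanSpace.inner_single_right (𝕜 := ℝ) i 1 y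
    have hei : e i = (1:ℝ) := by rw [he]; simp [EuclideanSpace.single_apply]
    have heval : ∀ y : E, fderiv ℝ f y e = (2 * k * β) * ((‖y‖ ^ 2 + c) ^ (β - 1) * y i) := by
      intro y
      rw [hfd y]
      simp only [ContinuousLinearMap.smul_apply, innerSL_apply_apply, smul_eq_mul]
      rw [hye y]; ring
    have hpos : (0:ℝ) < ‖x‖ ^ 2 + c := by positivity
    have h1 : HasFDerivAt (fun y : E => (‖y‖ ^ 2 + c) ^ (β - 1))
        (((β - 1) * (‖x‖ ^ 2 + c) ^ (β - 1 - 1)) • (2 • innerSL ℝ x)) x :=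
      (((hasStrictFDerivAt_norm_sq x).hasFDerivAt).add_const c).rpow_const
        (Or.inl hpos.ne')
    have hproj : HasFDerivAt (fun y : E => y i) (EuclideanSpace.proj (𝕜 := ℝ) i) x :=
      (EuclideanSpace.proj (𝕜 := ℝ) i).hasFDerivAt
    have hmul := (h1.mul hproj).const_mul (2 * k * β)
    have heq : (fun y : E => fderiv ℝ f y e)
        = fun y : E => (2 * k * β) * ((‖y‖ ^ 2 + c) ^ (β - 1) * y i) := funext heval
    have hderiv_eq := happ.unique (heq ▸ hmul)
    have h3 := congrArg (fun (L : EuclideanSpace ℝ (Fin n) →L[ℝ] ℝ) => L e) hderiv_eq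
    simp only [ContinuousLinearMap.comp_apply, ContinuousLinearMap.apply_apply,
      ContinuousLinearMap.smul_apply, ContinuousLinearMap.add_apply, innerSL_apply_apply,
      smul_eq_mul, nsmul_eq_mul, PiLp.proj_apply] at h3
    rw [h2, h3, hye x, hei, hA, hB]
    have hb2 : β - 1 - 1 = β - 2 := by ring
    rw [hb2]
    ring
  have hlap : lap f x = ∑ i : Fin n, (A * (x i) ^ 2 + B) := by
    unfold lap
    exact Finset.sum_congr rfl fun i _ => key i
  rw [hlap, Finset.sum_add_distrib, ← Finset.mul_sum, Finset.sum_const, Finset.card_fin,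
    nsmul_eq_mul, ← euclid_norm_sq]
  rw [hA, hB]
  ring

lemma t_hasDerivAt (lam C m m' q t : ℝ) (ht : 0 < t) (hpos : 0 < q + lam * t) :
    HasDerivAt (fun s => lam * s ^ (-(1 / (m - 1))) * (q + lam * s) ^ (m' / 2) + C * s)
      (lam * (-(1 / (m - 1)) * t ^ (-(1 / (m - 1)) - 1)) * (q + lam * t) ^ (m' / 2)
        + lam * t ^ (-(1 / (m - 1))) * ((m' / 2) * (q + lam * t) ^ (m' / 2 - 1) * lam)
        + C) t := by
  have h1 : HasDerivAt (fun s : ℝ => s ^ (-(1 / (m - 1))))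
      (-(1 / (m - 1)) * t ^ (-(1 / (m - 1)) - 1)) t :=
    Real.hasDerivAt_rpow_const (Or.inl ht.ne')
  have h2 : HasDerivAt (fun s : ℝ => q + lam * s) lam t := by
    simpa using ((hasDerivAt_id t).const_mul lam).const_add q
  have h3 := h2.rpow_const (p := m' / 2) (Or.inl hpos.ne')
  have h4 := ((h1.const_mul lam).mul h3).add ((hasDerivAt_id t).const_mul C)
  exact h4.congr_deriv (by ring)

end Aux

set_option maxHeartbeats 2000000 in
/-- superquadratic barrier.  If `H(x,p) ≥ |p|^m/C − C` with `m > 2`,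
`m' = m/(m−1) ∈ (1,2)`, and `0 ≤ a ≤ C` is `C²`, then for all sufficiently large `λ`
(depending only on `C`, `n`, `m`), `ψ` is a classical strict supersolution:
`ψ_t − a(x)Δψ + H(x,Dψ) > 0` on `ℝ^n × (0,∞)`. -/
theorem barrier_strict_supersolution {n : ℕ}
    (H : EuclideanSpace ℝ (Fin n) → EuclideanSpace ℝ (Fin n) → ℝ)
    (C m m' : ℝ) (hC : 0 < C) (hm : 2 < m) (hm' : m' = m / (m - 1))
    (hlow : ∀ x p, ‖p‖ ^ m / C - C ≤ H x p)
    (aD : EuclideanSpace ℝ (Fin n) → ℝ) (haD : ContDiff ℝ 2 aD)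
    (haD0 : ∀ x, 0 ≤ aD x) (haDC : ∀ x, aD x ≤ C) :
    ∃ lam₀ > 0, ∀ lam : ℝ, lam₀ ≤ lam →
      ∀ (x : EuclideanSpace ℝ (Fin n)) (t : ℝ), 0 < t →
        0 < deriv (fun s => barrier lam C m m' x s) t
              - aD x * lap (fun y => barrier lam C m m' y t) x
              + H x (gradient (fun y => barrier lam C m m' y t) x) := by
  have hm1 : (1:ℝ) < m - 1 := by linarith
  set α : ℝ := 1 / (m - 1) with hα
  have hα0 : 0 < α := by positivity
  have hm'1 : 1 < m' := by
    rw [hm', lt_div_iff₀ (by linarith)]; linarith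
  have hm'2 : m' < 2 := by
    rw [hm', div_lt_iff₀ (by linarith)]; linarith
  have hmm' : m' * (m - 1) = m := by
    rw [hm']; field_simp
  have hαm : α * m = α + 1 := by
    rw [hα]; field_simp; ring
  set δ : ℝ := m' / 2 - α with hδdef
  have hδ : 0 < δ := by
    have h0 : m' / 2 - α = (m - 2) / (2 * (m - 1)) := by
      rw [hm', hα]; field_simp
    rw [hδdef, h0]; exact div_pos (by linarith) (by linarith)
  set z₀ : ℝ := δ / (δ + 2 * α) with hz₀def
  have hz₀0 : 0 < z₀ := div_pos hδ (by linarith)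
  have hz₀1 : z₀ < 1 := by
    rw [hz₀def, div_lt_one (by linarith)]; linarith
  have hz₀m : (0:ℝ) < z₀ ^ (m / 2) := Real.rpow_pos_of_pos hz₀0 _
  have hm'm : (0:ℝ) < m' ^ m := Real.rpow_pos_of_pos (by linarith) _
  clear_value α δ z₀
  refine ⟨max 1 (max (2 * C * m' * n / δ) (C * (α + 1) / (m' ^ m * z₀ ^ (m / 2)))),
    lt_of_lt_of_le one_pos (le_max_left _ _), ?_⟩
  intro lam hlam x t ht
  have hlam1 : (1:ℝ) ≤ lam := le_trans (le_max_left _ _) hlam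
  have hlam0 : (0:ℝ) < lam := lt_of_lt_of_le one_pos hlam1
  -- abbreviations
  set q : ℝ := ‖x‖ ^ 2 with hqdef
  have hq0 : 0 ≤ q := by positivity
  set Q : ℝ := q + lam * t with hQdef
  have hc0 : 0 < lam * t := by positivity
  have hQ0 : 0 < Q := by rw [hQdef]; linarith
  have hQne : Q ≠ 0 := hQ0.ne'
  have hqQ : q < Q := by rw [hQdef]; linarith
  set z : ℝ := q / Q with hzdef
  have hz0 : 0 ≤ z := by rw [hzdef]; positivity
  have hz1 : z < 1 := by rw [hzdef, div_lt_one hQ0]; linarith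
  have hqz : q = z * Q := by rw [hzdef]; field_simp
  have htz : lam * t = (1 - z) * Q := by
    have h0 : (1 - z) * Q = Q - z * Q := by ring
    rw [h0, ← hqz, hQdef]; ring
  set K : ℝ := lam * t ^ (-α) with hKdef
  have htneg : (0:ℝ) < t ^ (-α) := Real.rpow_pos_of_pos ht _
  have hK0 : 0 < K := by rw [hKdef]; positivity
  set T : ℝ := lam * t ^ (-α - 1) * Q ^ (m' / 2 - 1) with hTdef
  have htneg1 : (0:ℝ) < t ^ (-α - 1) := Real.rpow_pos_of_pos ht _
  have hQβ1 : (0:ℝ) < Q ^ (m' / 2 - 1) := Real.rpow_pos_of_pos hQ0 _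
  have hT0 : 0 < T := by rw [hTdef]; positivity
  clear_value q Q z K T
  -- basic rpow identities
  have ht' : t ^ (-α) = t ^ (-α - 1) * t := by
    rw [← Real.rpow_add_one ht.ne' (-α - 1)]; congr 1; ring
  have hQ' : Q ^ (m' / 2) = Q ^ (m' / 2 - 1) * Q := by
    rw [← Real.rpow_add_one hQne (m' / 2 - 1)]; congr 1; ring
  -- time derivative
  have hderiv : deriv (fun s => barrier lam C m m' x s) t
      = lam * (-α * t ^ (-α - 1)) * Q ^ (m' / 2)
        + lam * t ^ (-α) * ((m' / 2) * Q ^ (m' / 2 - 1) * lam) + C := by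
    have h := (t_hasDerivAt lam C m m' q t ht (by rw [← hQdef]; exact hQ0)).deriv
    rw [← hα] at h
    unfold barrier
    rw [← hα, ← hqdef, h, hQdef]
  -- gradient
  have hfun : (fun y : EuclideanSpace ℝ (Fin n) => barrier lam C m m' y t)
      = fun y : EuclideanSpace ℝ (Fin n) =>
          (lam * t ^ (-α)) * (‖y‖ ^ 2 + lam * t) ^ (m' / 2) + C * t := by
    funext y; unfold barrier; rw [← hα]
  have hgrad : gradient (fun y => barrier lam C m m' y t) x
      = ((K * m' * Q ^ (m' / 2 - 1)) • x) := by
    have hg := (sp_hasGradientAt (lam * t ^ (-α)) (lam * t) (m' / 2) (C * t) hc0 x).gradient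
    rw [hfun, hg, ← hqdef, ← hQdef, ← hKdef]
    rw [show K * (m' / 2) * Q ^ (m' / 2 - 1) * 2 = K * m' * Q ^ (m' / 2 - 1) by ring]
  have hgradnorm : ‖gradient (fun y => barrier lam C m m' y t) x‖
      = K * m' * Q ^ (m' / 2 - 1) * ‖x‖ := by
    rw [hgrad, norm_smul, Real.norm_eq_abs, abs_of_pos (by positivity)]
  -- laplacian
  have hlapval : lap (fun y => barrier lam C m m' y t) x
      = 4 * K * (m' / 2) * (m' / 2 - 1) * Q ^ (m' / 2 - 2) * q
          + 2 * K * (m' / 2) * n * Q ^ (m' / 2 - 1) := by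
    have hL := sp_lap (lam * t ^ (-α)) (lam * t) (m' / 2) (C * t) hc0 x
    rw [hfun, hL, ← hqdef, ← hQdef, ← hKdef]
  -- bound on a·Δψ
  have hlapbound : aD x * lap (fun y => barrier lam C m m' y t) x
      ≤ C * (K * m' * n * Q ^ (m' / 2 - 1)) := by
    rw [hlapval]
    have hQβ2 : (0:ℝ) < Q ^ (m' / 2 - 2) := Real.rpow_pos_of_pos hQ0 _
    have hneg : 4 * K * (m' / 2) * (m' / 2 - 1) * Q ^ (m' / 2 - 2) * q ≤ 0 := by
      have h1 : m' / 2 - 1 < 0 := by linarith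
      have h2 : (0:ℝ) ≤ 4 * K * (m' / 2) * Q ^ (m' / 2 - 2) * q := by positivity
      nlinarith
    have hpos2 : (0:ℝ) ≤ 2 * K * (m' / 2) * n * Q ^ (m' / 2 - 1) := by positivity
    have haDx0 := haD0 x
    have haDxC := haDC x
    calc aD x * (4 * K * (m' / 2) * (m' / 2 - 1) * Q ^ (m' / 2 - 2) * q
            + 2 * K * (m' / 2) * n * Q ^ (m' / 2 - 1))
        = aD x * (4 * K * (m' / 2) * (m' / 2 - 1) * Q ^ (m' / 2 - 2) * q)
          + aD x * (2 * K * (m' / 2) * n * Q ^ (m' / 2 - 1)) := by ring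
      _ ≤ 0 + C * (2 * K * (m' / 2) * n * Q ^ (m' / 2 - 1)) := by
          gcongr
          exact mul_nonpos_of_nonneg_of_nonpos haDx0 hneg
      _ = C * (K * m' * n * Q ^ (m' / 2 - 1)) := by ring
  -- the m-th power of the gradient norm
  have hxnorm : ‖x‖ ^ m = q ^ (m / 2) := by
    rw [hqdef, ← Real.rpow_natCast ‖x‖ 2, ← Real.rpow_mul (norm_nonneg x)]
    congr 1
    push_cast
    ring
  have hgm : ‖gradient (fun y => barrier lam C m m' y t) x‖ ^ m
      = T * (lam ^ (m - 1) * m' ^ m * (z ^ (m / 2) * Q)) := by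
    rw [hgradnorm]
    have h1 : (K * m' * Q ^ (m' / 2 - 1) * ‖x‖ : ℝ) ^ m
        = K ^ m * m' ^ m * (Q ^ (m' / 2 - 1)) ^ m * ‖x‖ ^ m := by
      rw [Real.mul_rpow (by positivity) (norm_nonneg x),
        Real.mul_rpow (by positivity) hQβ1.le,
        Real.mul_rpow hK0.le (by linarith)]
    have hKm : K ^ m = lam ^ (m - 1) * lam * t ^ (-α - 1) := by
      rw [hKdef, Real.mul_rpow hlam0.le htneg.le, ← Real.rpow_mul ht.le]
      have h2 : -α * m = -α - 1 := by rw [neg_mul, hαm]; ring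
      have h3 : lam ^ m = lam ^ (m - 1) * lam := by
        rw [← Real.rpow_add_one hlam0.ne' (m - 1)]; congr 1; ring
      rw [h2, h3]
    have hQm : (Q ^ (m' / 2 - 1)) ^ m = Q ^ ((m' - m) / 2) := by
      rw [← Real.rpow_mul hQ0.le]; congr 1; linear_combination hmm' / 2
    have hQcomb : Q ^ ((m' - m) / 2) * Q ^ (m / 2) = Q ^ (m' / 2 - 1) * Q := by
      rw [← Real.rpow_add hQ0, ← hQ']; congr 1; ring
    have hq' : q ^ (m / 2) = z ^ (m / 2) * Q ^ (m / 2) := by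
      rw [hqz, Real.mul_rpow hz0 hQ0.le]
    rw [h1, hKm, hQm, hxnorm, hq']
    calc lam ^ (m - 1) * lam * t ^ (-α - 1) * m' ^ m * Q ^ ((m' - m) / 2)
          * (z ^ (m / 2) * Q ^ (m / 2))
        = lam ^ (m - 1) * lam * t ^ (-α - 1) * m' ^ m
            * (Q ^ ((m' - m) / 2) * Q ^ (m / 2)) * z ^ (m / 2) := by ring
      _ = T * (lam ^ (m - 1) * m' ^ m * (z ^ (m / 2) * Q)) := by
          rw [hQcomb, hTdef]; ring
  -- the scalar inequality
  set A : ℝ := lam ^ (m - 1) * m' ^ m / C with hAdef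
  set r : ℝ := C * m' * n / lam with hrdef
  have hr0 : 0 ≤ r := by rw [hrdef]; positivity
  have hA0 : 0 < A := by rw [hAdef]; positivity
  clear_value A r
  have hδ' : r ≤ δ / 2 := by
    have h1 : 2 * C * m' * n / δ ≤ lam :=
      le_trans (le_trans (le_max_left _ _) (le_max_right 1 _)) hlam
    rw [div_le_iff₀ hδ] at h1
    rw [hrdef, div_le_iff₀ hlam0]
    linarith
  have hAz₀ : α + 1 ≤ A * z₀ ^ (m / 2) := by
    have h2 : C * (α + 1) / (m' ^ m * z₀ ^ (m / 2)) ≤ lam :=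
      le_trans (le_trans (le_max_right _ _) (le_max_right 1 _)) hlam
    have h3 : lam ≤ lam ^ (m - 1) := by
      calc lam = lam ^ (1:ℝ) := (Real.rpow_one lam).symm
        _ ≤ lam ^ (m - 1) := Real.rpow_le_rpow_of_exponent_le hlam1 (by linarith)
    rw [div_le_iff₀ (mul_pos hm'm hz₀m)] at h2
    rw [hAdef]
    have h4 : lam ^ (m - 1) * m' ^ m / C * z₀ ^ (m / 2)
        = lam ^ (m - 1) * (m' ^ m * z₀ ^ (m / 2)) / C := by ring
    rw [h4, le_div_iff₀ hC]
    have h5 : lam * (m' ^ m * z₀ ^ (m / 2)) ≤ lam ^ (m - 1) * (m' ^ m * z₀ ^ (m / 2)) :=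
      mul_le_mul_of_nonneg_right h3 (mul_pos hm'm hz₀m).le
    linarith
  have hgz : 0 < A * z ^ (m / 2) - α * z + (δ - r) * (1 - z) := by
    rcases le_or_gt z₀ z with hcase | hcase
    · have hmono : z₀ ^ (m / 2) ≤ z ^ (m / 2) :=
        Real.rpow_le_rpow hz₀0.le hcase (by linarith)
      have h4 : A * z₀ ^ (m / 2) ≤ A * z ^ (m / 2) :=
        mul_le_mul_of_nonneg_left hmono hA0.le
      have h5 : 0 ≤ (δ - r) * (1 - z) :=
        mul_nonneg (by linarith) (by linarith)
      have h6 : α * z ≤ α * 1 := mul_le_mul_of_nonneg_left hz1.le hα0.le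
      linarith
    · have hzpow : 0 ≤ z ^ (m / 2) := Real.rpow_nonneg hz0 _
      have h6 : z * (δ + 2 * α) < δ := by
        rw [hz₀def, lt_div_iff₀ (by linarith)] at hcase
        linarith
      have h7 : 0 ≤ A * z ^ (m / 2) := mul_nonneg hA0.le hzpow
      have h8 : (δ / 2) * (1 - z) ≤ (δ - r) * (1 - z) :=
        mul_le_mul_of_nonneg_right (by linarith) (by linarith)
      linarith only [h6, h7, h8]
  have hWpos : 0 < -α * Q + (m' / 2) * (lam * t) - C * m' * n * t
      + lam ^ (m - 1) * m' ^ m * (z ^ (m / 2) * Q) / C := by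
    have ht2 : C * m' * (n:ℝ) * t = r * ((1 - z) * Q) := by
      rw [hrdef, ← htz]; field_simp
    have hterm : lam ^ (m - 1) * m' ^ m * (z ^ (m / 2) * Q) / C
        = A * z ^ (m / 2) * Q := by
      rw [hAdef]; ring
    rw [hterm, ht2, htz]
    have h7 : -α * Q + m' / 2 * ((1 - z) * Q) - r * ((1 - z) * Q) + A * z ^ (m / 2) * Q
        = (A * z ^ (m / 2) - α * z + (δ - r) * (1 - z)) * Q := by
      rw [hδdef]; ring
    rw [h7]
    exact mul_pos hgz hQ0
  -- final assembly
  have key2 : deriv (fun s => barrier lam C m m' x s) t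
        - C * (K * m' * n * Q ^ (m' / 2 - 1))
        + (‖gradient (fun y => barrier lam C m m' y t) x‖ ^ m / C - C)
      = T * (-α * Q + (m' / 2) * (lam * t) - C * m' * n * t
          + lam ^ (m - 1) * m' ^ m * (z ^ (m / 2) * Q) / C) := by
    rw [hderiv, hgm, hKdef, ht', hQ', hTdef]
    ring
  have hfinal := mul_pos hT0 hWpos
  have hHg := hlow x (gradient (fun y => barrier lam C m m' y t) x)
  have h2 : deriv (fun s => barrier lam C m m' x s) t
        - C * (K * m' * n * Q ^ (m' / 2 - 1))
        + (‖gradient (fun y => barrier lam C m m' y t) x‖ ^ m / C - C)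
      ≤ deriv (fun s => barrier lam C m m' x s) t
        - aD x * lap (fun y => barrier lam C m m' y t) x
        + H x (gradient (fun y => barrier lam C m m' y t) x) :=
    add_le_add (sub_le_sub_left hlapbound _) hHg
  exact lt_of_lt_of_le (key2.symm ▸ hfinal) h2
end
end
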